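/- Let E be a real inner product space, ι a nonempty index set, L ≥ 0, and g : ι → E → ℝ a family of differentiable functions whose gradients are all L-Lipschitz: ‖∇(g i)(x) − ∇(g i)(y)‖ ≤ L‖x − y‖ for all i, x, y. Assume that for every w ∈ E the set {g i w : i ∈ ι} is bounded above, and let f(w) = ⨆ i, g i w. Then f is L-weakly convex, i.e., the function w ↦ f(w) + (L/2)‖w‖² is convex on E. -/

import Mathlib

open Set

/-- A single function with `L`-Lipschitz gradient becomes convex after adding `(L/2)‖·‖²`. -/
lemma convexOn_add_half_normSq_of_lipschitz_grad
    {E : Type*} [NormedAddCommGroup E] [InnerProductSpace ℝ E] [CompleteSpace E]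
    (L : ℝ) (f : E → ℝ) (G : E → E)
    (hf : ∀ x, HasGradientAt f (G x) x)
    (hlip : ∀ x y, ‖G x - G y‖ ≤ L * ‖x - y‖) :
    ConvexOn ℝ Set.univ (fun w : E => f w + L / 2 * ‖w‖ ^ 2) := by
  refine ⟨convex_univ, fun x _ y _ a b ha hb hab => ?_⟩
  set v : E := y - x with hv
  set c : ℝ → E := fun t => x + t • v with hc
  have hcder : ∀ t : ℝ, HasDerivAt c v t := by
    intro t
    have h := ((hasDerivAt_id t).smul_const v).const_add x
    simp only [one_smul] at h
    exact h
  set φ : ℝ → ℝ := fun t => f (c t) + L / 2 * ‖c t‖ ^ 2 with hφ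
  set D : ℝ → ℝ := fun t => inner ℝ (G (c t)) v + L / 2 * (2 * inner ℝ (c t) v) with hD
  have hφder : ∀ t : ℝ, HasDerivAt φ (D t) t := by
    intro t
    have h1 : HasDerivAt (fun t => f (c t)) ((inner ℝ (G (c t)) v : ℝ)) t := by
      have := ((hf (c t)).hasFDerivAt.comp_hasDerivAt t (hcder t))
      simp [InnerProductSpace.toDual_apply_apply] at this
      exact this
    have h2 : HasDerivAt (fun t => ‖c t‖ ^ 2) (2 * (inner ℝ (c t) v : ℝ)) t :=
      (hcder t).norm_sq
    exact h1.add (h2.const_mul (L / 2))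
  have hcsub : ∀ s t : ℝ, c t - c s = (t - s) • v := by
    intro s t
    simp [hc, sub_smul]
  have hmono : Monotone D := by
    intro s t hst
    rcases eq_or_lt_of_le hst with rfl | hst
    · exact le_rfl
    have hts : (0:ℝ) < t - s := sub_pos.mpr hst
    have key : D t - D s = inner ℝ (G (c t) - G (c s)) v + L * inner ℝ (c t - c s) v := by
      simp [hD, inner_sub_left]
      ring
    have h2 : (inner ℝ (c t - c s) v : ℝ) = (t - s) * ‖v‖ ^ 2 := by
      rw [hcsub s t, real_inner_smul_left, real_inner_self_eq_norm_sq]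
    have h1 : -(L * ((t - s) * ‖v‖ ^ 2)) ≤ (inner ℝ (G (c t) - G (c s)) v : ℝ) := by
      have hcs : ‖G (c t) - G (c s)‖ ≤ L * ((t - s) * ‖v‖) := by
        have := hlip (c t) (c s)
        rw [hcsub s t] at this
        simpa [norm_smul, abs_of_pos hts, mul_assoc] using this
      have habs := abs_real_inner_le_norm (G (c t) - G (c s)) v
      have hnab := neg_abs_le ((inner ℝ (G (c t) - G (c s)) v : ℝ))
      nlinarith [norm_nonneg v, norm_nonneg (G (c t) - G (c s))]
    have : 0 ≤ D t - D s := by rw [key, h2]; nlinarith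
    linarith
  have hφconv : ConvexOn ℝ Set.univ φ := by
    have hdiff : Differentiable ℝ φ := fun t => (hφder t).differentiableAt
    have hderiv : deriv φ = D := funext fun t => (hφder t).deriv
    exact Monotone.convexOn_univ_of_deriv hdiff (hderiv ▸ hmono)
  have key := hφconv.2 (mem_univ (0:ℝ)) (mem_univ (1:ℝ)) ha hb hab
  have e0 : c 0 = x := by simp [hc]
  have e1 : c 1 = y := by simp [hc, hv]
  have eb : c b = a • x + b • y := by
    have : a = 1 - b := by linarith
    simp only [hc, hv, this]
    module
  have hb' : a • (0:ℝ) + b • 1 = b := by simp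
  rw [hb'] at key
  simp only [smul_eq_mul] at key ⊢
  rw [← eb, ← e0, ← e1]
  exact key

theorem weaklyConvex_ciSup_of_lipschitz_gradients
    {E : Type*} [NormedAddCommGroup E] [InnerProductSpace ℝ E] [CompleteSpace E]
    {ι : Type*} [Nonempty ι] (L : ℝ) (hL : 0 ≤ L)
    (g : ι → E → ℝ) (grad : ι → E → E)
    (hgrad : ∀ (i : ι) (x : E), HasGradientAt (g i) (grad i x) x)
    (hlip : ∀ (i : ι) (x y : E), ‖grad i x - grad i y‖ ≤ L * ‖x - y‖)
    (hbdd : ∀ w : E, BddAbove (Set.range fun i => g i w)) :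
    ConvexOn ℝ Set.univ (fun w : E => (⨆ i, g i w) + L / 2 * ‖w‖ ^ 2) := by
  have hconv : ∀ i, ConvexOn ℝ Set.univ (fun w : E => g i w + L / 2 * ‖w‖ ^ 2) :=
    fun i => convexOn_add_half_normSq_of_lipschitz_grad L (g i) (grad i) (hgrad i) (hlip i)
  have hrw : ∀ w : E, (⨆ i, g i w) + L / 2 * ‖w‖ ^ 2
      = ⨆ i, (g i w + L / 2 * ‖w‖ ^ 2) := fun w => ciSup_add (hbdd w) _
  refine ⟨convex_univ, fun x _ y _ a b ha hb hab => ?_⟩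
  simp only [hrw, smul_eq_mul]
  have hbdd' : ∀ w : E, BddAbove (Set.range fun i => g i w + L / 2 * ‖w‖ ^ 2) := by
    intro w
    obtain ⟨M, hM⟩ := hbdd w
    exact ⟨M + L / 2 * ‖w‖ ^ 2, fun r ⟨i, hi⟩ => by
      simp only [← hi]; exact add_le_add_left (hM ⟨i, rfl⟩) _⟩
  refine ciSup_le fun i => ?_
  calc g i (a • x + b • y) + L / 2 * ‖a • x + b • y‖ ^ 2
      ≤ a * (g i x + L / 2 * ‖x‖ ^ 2) + b * (g i y + L / 2 * ‖y‖ ^ 2) := by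
        simpa [smul_eq_mul] using (hconv i).2 (mem_univ x) (mem_univ y) ha hb hab
    _ ≤ a * (⨆ j, (g j x + L / 2 * ‖x‖ ^ 2)) + b * (⨆ j, (g j y + L / 2 * ‖y‖ ^ 2)) := by
        gcongr
        · exact le_ciSup (hbdd' x) i
        · exact le_ciSup (hbdd' y) i
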